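/- Let R be an integral domain of characteristic zero with binomial closure R^bin and canonical injection ι : R → R^bin, and let S be a binomial ring. If φ : R → S is a ring homomorphism and ψ₁, ψ₂ : R^bin → S are ring homomorphisms with ψ₁ ∘ ι = φ = ψ₂ ∘ ι, then ψ₁ = ψ₂; that is, the extension of φ to the binomial closure is unique. -/
import Mathlib


/-- The multiplicative set of nonzero elements of the image of `ℤ` in `R`. -/
def intNonzero (R : Type*) [CommRing R] [IsDomain R] : Submonoid R where
  carrier := {r : R | (∃ m : ℤ, (m : R) = r) ∧ r ≠ 0}
  one_mem' := ⟨⟨1, by simp⟩, one_ne_zero⟩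
  mul_mem' := by
    rintro a b ⟨⟨m, hm⟩, ha⟩ ⟨⟨k, hk⟩, hb⟩
    exact ⟨⟨m * k, by push_cast; rw [hm, hk]⟩, mul_ne_zero ha hb⟩

/-- The binomial coefficient `C_x^n = x (x-1) ⋯ (x-n+1) / n!` in a commutative ring `L`
(where `n!` is invertible; `Ring.inverse` returns the inverse of a unit). -/
noncomputable def binom {L : Type*} [CommRing L] (x : L) (n : ℕ) : L :=
  (∏ i ∈ Finset.range n, (x - (i : L))) * Ring.inverse (n.factorial : L)

/-- A subring `B` of `L` is binomially closed if it contains all binomial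
coefficients `C_x^n` for `x ∈ B`, `n : ℕ`. -/
def BinClosed {L : Type*} [CommRing L] (B : Subring L) : Prop :=
  ∀ x ∈ B, ∀ n : ℕ, binom x n ∈ B

/-- The binomial closure of `R`: the smallest binomially closed subring of the
localization `L` of `R` at the nonzero integers containing the image of `R`. -/
noncomputable def binClosure (R : Type*) [CommRing R] [IsDomain R] [CharZero R] :
    Subring (Localization (intNonzero R)) :=
  sInf {B | BinClosed B ∧ (algebraMap R (Localization (intNonzero R))).range ≤ B}

/-- The canonical injection `ι : R → R^bin`. -/
noncomputable def iotaBin (R : Type*) [CommRing R] [IsDomain R] [CharZero R] :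
    R →+* binClosure R :=
  (algebraMap R (Localization (intNonzero R))).codRestrict (binClosure R)
    (fun r => Subring.mem_sInf.mpr fun _ hB => hB.2 ⟨r, rfl⟩)

/-- A binomial ring: an integral domain of characteristic zero in which each
`x (x-1) ⋯ (x-n+1)` is divisible by `n!`. (The domain and characteristic-zero
assumptions are carried as instance hypotheses where used.) -/
def IsBinomialRing (S : Type*) [CommRing S] : Prop :=
  ∀ (x : S) (n : ℕ), ∃ y : S, (n.factorial : S) * y = ∏ i ∈ Finset.range n, (x - (i : S))

theorem binClosure_binClosed (R : Type*) [CommRing R] [IsDomain R] [CharZero R] :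
    BinClosed (binClosure R) := by
  intro x hx n
  rw [binClosure, Subring.mem_sInf] at hx ⊢
  intro B hB
  exact hB.1 x (hx B hB) n

theorem factorial_isUnit (R : Type*) [CommRing R] [IsDomain R] [CharZero R] (n : ℕ) :
    IsUnit ((n.factorial : ℕ) : Localization (intNonzero R)) := by
  have h1 : ((n.factorial : ℕ) : Localization (intNonzero R)) =
      algebraMap R (Localization (intNonzero R)) (n.factorial : R) := by
    rw [map_natCast]
  rw [h1]
  exact IsLocalization.map_units _
    (⟨(n.factorial : R), ⟨(n.factorial : ℤ), by push_cast; ring⟩,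
      Nat.cast_ne_zero.mpr n.factorial_ne_zero⟩ : intNonzero R)

/-- the extension of `φ : R → S` to the binomial closure `R^bin` is unique:
any two ring homomorphisms `ψ₁, ψ₂ : R^bin → S` with `ψ₁ ∘ ι = φ = ψ₂ ∘ ι` coincide. -/
theorem binClosure_hom_extension_unique (R S : Type*) [CommRing R] [IsDomain R] [CharZero R]
    [CommRing S] [IsDomain S] [CharZero S] (hS : IsBinomialRing S) (φ : R →+* S)
    (ψ₁ ψ₂ : binClosure R →+* S)
    (h₁ : ψ₁.comp (iotaBin R) = φ) (h₂ : ψ₂.comp (iotaBin R) = φ) :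
    ψ₁ = ψ₂ := by
  set E : Subring (Localization (intNonzero R)) :=
    Subring.map (binClosure R).subtype (RingHom.eqLocus ψ₁ ψ₂) with hE
  have hEmem : BinClosed E ∧ (algebraMap R (Localization (intNonzero R))).range ≤ E := by
    constructor
    · rintro x hx n
      obtain ⟨⟨x, hxB⟩, hxeq, rfl⟩ := hx
      have hbB : binom x n ∈ binClosure R := binClosure_binClosed R x hxB n
      refine ⟨⟨binom x n, hbB⟩, ?_, rfl⟩
      have heqL : ((n.factorial : ℕ) : Localization (intNonzero R)) * binom x n =
          ∏ i ∈ Finset.range n, (x - (i : Localization (intNonzero R))) := by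
        rw [binom, mul_comm, mul_assoc, Ring.inverse_mul_cancel _ (factorial_isUnit R n),
          mul_one]
      have heqB : ((n.factorial : ℕ) : binClosure R) * ⟨binom x n, hbB⟩ =
          ∏ i ∈ Finset.range n, ((⟨x, hxB⟩ : binClosure R) - (i : binClosure R)) := by
        apply Subtype.ext
        push_cast
        exact heqL
      have h1 := congrArg ψ₁ heqB
      have h2 := congrArg ψ₂ heqB
      rw [map_mul, map_natCast, map_prod] at h1 h2
      have hne : ((n.factorial : ℕ) : S) ≠ 0 := Nat.cast_ne_zero.mpr n.factorial_ne_zero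
      show ψ₁ ⟨binom x n, hbB⟩ = ψ₂ ⟨binom x n, hbB⟩
      apply mul_left_cancel₀ hne
      rw [h1, h2]
      apply Finset.prod_congr rfl
      intro i _
      rw [ψ₁.map_sub, ψ₂.map_sub, map_natCast, map_natCast, hxeq]
    · rintro _ ⟨r, rfl⟩
      refine ⟨iotaBin R r, ?_, rfl⟩
      show ψ₁ (iotaBin R r) = ψ₂ (iotaBin R r)
      rw [← RingHom.comp_apply, ← RingHom.comp_apply, h₁, h₂]
  have hle : binClosure R ≤ E := sInf_le hEmem
  ext a
  obtain ⟨b, hb, hbv⟩ := hle a.2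
  have : b = a := Subtype.ext hbv
  rw [← this]
  exact hb
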